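/- Let 0 < α ≤ 1, let s and t be positive integers with √t > α, and let x, x̂ ∈ ℝⁿ satisfy ‖x̂‖₁ − α‖x̂‖₂ ≤ ‖x‖₁ − α‖x‖₂. Set h = x̂ − x, let T₀ be the support of h_max(s), let T₁ be the index set of the t largest-magnitude entries of h_{-max(s)}, and T₀₁ = T₀ ∪ T₁. Suppose A ∈ ℝ^{m×n} has (ℓ₂,ℓ₁)-RIP constants satisfying (1 − δ_{t+s}^{lb})‖v‖₂ ≤ ‖Av‖₁ for all (t+s)-sparse v and ‖Av‖₁ ≤ (1 + δ_t^{ub})‖v‖₂ for all t-sparse v. Then ‖Ah‖₁ ≥ ρ_t ‖h_{T₀₁}‖₂ − 2(1 + δ_t^{ub})‖x_{-max(s)}‖₁/(√t − α), where ρ_t = 1 − δ_{t+s}^{lb} − (1 + δ_t^{ub})/a(s,t;α) and a(s,t;α) = (√t − α)/(√s + α). -/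

import Mathlib

open Finset

/-- The ℓ₁ norm of a vector in `ℝⁿ`. -/
noncomputable def l1norm {n : ℕ} (x : Fin n → ℝ) : ℝ := ∑ i, |x i|

/-- The ℓ₂ norm of a vector in `ℝⁿ`. -/
noncomputable def l2norm {n : ℕ} (x : Fin n → ℝ) : ℝ := Real.sqrt (∑ i, (x i) ^ 2)

/-- The restriction `x_S` of a vector `x` to an index set `S` (equal to `x` on `S`, zero
outside `S`). -/
def restr {n : ℕ} (x : Fin n → ℝ) (S : Finset (Fin n)) : Fin n → ℝ :=
  fun i => if i ∈ S then x i else 0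

/-- `T` is an index set of the `s` largest-magnitude entries of `x` among the indices in `S`. -/
def IsMaxIdxOn {n : ℕ} (x : Fin n → ℝ) (s : ℕ) (T S : Finset (Fin n)) : Prop :=
  T ⊆ S ∧ T.card = s ∧ ∀ i ∈ T, ∀ j ∈ S \ T, |x j| ≤ |x i|

/-- `T` is an index set of the `s` largest-magnitude entries of `x`. -/
def IsMaxIdx {n : ℕ} (x : Fin n → ℝ) (s : ℕ) (T : Finset (Fin n)) : Prop :=
  IsMaxIdxOn x s T Finset.univ

/-- A vector is `r`-sparse: it has at most `r` nonzero entries. -/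
def Sparse {n : ℕ} (r : ℕ) (v : Fin n → ℝ) : Prop :=
  ∃ S : Finset (Fin n), S.card ≤ r ∧ ∀ i ∉ S, v i = 0

lemma l1norm_nonneg {n : ℕ} (x : Fin n → ℝ) : 0 ≤ l1norm x :=
  Finset.sum_nonneg fun i _ => abs_nonneg _

lemma l2norm_nonneg {n : ℕ} (x : Fin n → ℝ) : 0 ≤ l2norm x := Real.sqrt_nonneg _

lemma l1norm_restr {n : ℕ} (x : Fin n → ℝ) (S : Finset (Fin n)) :
    l1norm (restr x S) = ∑ i ∈ S, |x i| := by
  unfold l1norm restr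
  simp only [apply_ite abs, abs_zero, Finset.sum_ite_mem, Finset.univ_inter]

lemma sum_sq_restr {n : ℕ} (x : Fin n → ℝ) (S : Finset (Fin n)) :
    ∑ i, (restr x S i) ^ 2 = ∑ i ∈ S, x i ^ 2 := by
  unfold restr
  simp only [apply_ite (fun y : ℝ => y ^ 2), ne_eq, OfNat.ofNat_ne_zero,
    not_false_eq_true, zero_pow, Finset.sum_ite_mem, Finset.univ_inter]

lemma l2norm_restr {n : ℕ} (x : Fin n → ℝ) (S : Finset (Fin n)) :
    l2norm (restr x S) = Real.sqrt (∑ i ∈ S, x i ^ 2) := by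
  unfold l2norm; rw [sum_sq_restr]

lemma l2norm_eq_norm {n : ℕ} (x : Fin n → ℝ) :
    l2norm x = ‖(WithLp.equiv 2 (Fin n → ℝ)).symm x‖ := by
  rw [EuclideanSpace.norm_eq]
  unfold l2norm
  congr 1
  exact Finset.sum_congr rfl fun i _ => by
    show x i ^ 2 = ‖x i‖ ^ 2
    rw [Real.norm_eq_abs, sq_abs]

lemma l2norm_add_le {n : ℕ} (x y : Fin n → ℝ) : l2norm (x + y) ≤ l2norm x + l2norm y := by
  rw [l2norm_eq_norm, l2norm_eq_norm, l2norm_eq_norm]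
  exact norm_add_le ((WithLp.equiv 2 (Fin n → ℝ)).symm x) ((WithLp.equiv 2 (Fin n → ℝ)).symm y)

lemma l1_mulVec_add_le {n m : ℕ} (A : Matrix (Fin m) (Fin n) ℝ) (u v : Fin n → ℝ) :
    l1norm (A.mulVec (u + v)) ≤ l1norm (A.mulVec u) + l1norm (A.mulVec v) := by
  rw [Matrix.mulVec_add]
  unfold l1norm
  rw [← Finset.sum_add_distrib]
  exact Finset.sum_le_sum fun i _ => abs_add_le _ _

lemma l1_mulVec_neg {n m : ℕ} (A : Matrix (Fin m) (Fin n) ℝ) (u : Fin n → ℝ) :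
    l1norm (A.mulVec (-u)) = l1norm (A.mulVec u) := by
  rw [Matrix.mulVec_neg]
  unfold l1norm
  exact Finset.sum_congr rfl fun i _ => by simp

lemma sum_dominate {β : Type*} (f : β → ℝ) (hf : ∀ i, 0 ≤ f i) (B C : Finset β)
    (hcard : B.card ≤ C.card) (hd : ∀ j ∈ B, ∀ i ∈ C, f j ≤ f i) :
    ∑ j ∈ B, f j ≤ ∑ i ∈ C, f i := by
  rcases B.eq_empty_or_nonempty with hB | hB
  · rw [hB, Finset.sum_empty]
    exact Finset.sum_nonneg fun i _ => hf i
  · have hC : C.Nonempty := Finset.card_pos.mp (lt_of_lt_of_le (Finset.card_pos.mpr hB) hcard)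
    set c := C.inf' hC f with hc
    have hc0 : 0 ≤ c := by
      obtain ⟨i, hi, hie⟩ := Finset.exists_mem_eq_inf' hC f
      rw [hc, hie]; exact hf i
    calc ∑ j ∈ B, f j ≤ ∑ _j ∈ B, c :=
          Finset.sum_le_sum fun j hj => Finset.le_inf' hC f (fun i hi => hd j hj i hi)
      _ = B.card * c := by rw [Finset.sum_const, nsmul_eq_mul]
      _ ≤ C.card * c := by
          exact mul_le_mul_of_nonneg_right (by exact_mod_cast hcard) hc0
      _ ≤ ∑ i ∈ C, f i := by
          rw [← nsmul_eq_mul]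
          exact Finset.card_nsmul_le_sum C f c (fun i hi => Finset.inf'_le f hi)

lemma exists_top {n : ℕ} (h : Fin n → ℝ) :
    ∀ (k : ℕ) (R : Finset (Fin n)), k ≤ R.card →
      ∃ T, T ⊆ R ∧ T.card = k ∧ ∀ i ∈ T, ∀ j ∈ R \ T, |h j| ≤ |h i| := by
  intro k
  induction k with
  | zero => intro R _; exact ⟨∅, Finset.empty_subset R, rfl, by simp⟩
  | succ k ih =>
    intro R hR
    have hRne : R.Nonempty := Finset.card_pos.mp (Nat.lt_of_lt_of_le (Nat.succ_pos k) hR)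
    obtain ⟨i₀, hi₀R, hi₀max⟩ := Finset.exists_max_image R (fun i => |h i|) hRne
    have hcard : k ≤ (R.erase i₀).card := by
      rw [Finset.card_erase_of_mem hi₀R]; omega
    obtain ⟨T', hT'sub, hT'card, hT'max⟩ := ih (R.erase i₀) hcard
    have hi₀T' : i₀ ∉ T' := fun hmem => (Finset.mem_erase.mp (hT'sub hmem)).1 rfl
    refine ⟨insert i₀ T', ?_, ?_, ?_⟩
    · intro i hi
      rcases Finset.mem_insert.mp hi with rfl | hi
      · exact hi₀R
      · exact Finset.mem_of_mem_erase (hT'sub hi)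
    · rw [Finset.card_insert_of_notMem hi₀T', hT'card]
    · intro i hi j hj
      have hjR : j ∈ R := (Finset.mem_sdiff.mp hj).1
      have hjT : j ∉ insert i₀ T' := (Finset.mem_sdiff.mp hj).2
      rcases Finset.mem_insert.mp hi with rfl | hi
      · exact hi₀max j hjR
      · refine hT'max i hi j ?_
        rw [Finset.mem_sdiff, Finset.mem_erase]
        exact ⟨⟨fun hji => hjT (hji ▸ Finset.mem_insert_self i₀ T'), hjR⟩,
          fun hjT' => hjT (Finset.mem_insert_of_mem hjT')⟩

lemma restr_split {n : ℕ} (h : Fin n → ℝ) {T R : Finset (Fin n)} (hTR : T ⊆ R) :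
    restr h R = restr h T + restr h (R \ T) := by
  funext i
  simp only [restr, Pi.add_apply]
  by_cases hiT : i ∈ T
  · have hiR : i ∈ R := hTR hiT
    have hnot : i ∉ R \ T := fun hx => (Finset.mem_sdiff.mp hx).2 hiT
    simp [hiT, hiR, hnot]
  · by_cases hiR : i ∈ R
    · simp [hiT, hiR, Finset.mem_sdiff.mpr ⟨hiR, hiT⟩]
    · have hnot : i ∉ R \ T := fun hx => hiR (Finset.mem_sdiff.mp hx).1
      simp [hiT, hiR, hnot]

lemma small_bound {n m t : ℕ} (ht : 0 < t) (h : Fin n → ℝ) (A : Matrix (Fin m) (Fin n) ℝ)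
    (c : ℝ) (hc : 0 ≤ c)
    (hRIP : ∀ v : Fin n → ℝ, Sparse t v → l1norm (A.mulVec v) ≤ c * l2norm v)
    (R : Finset (Fin n)) (b : ℝ) (hb : 0 ≤ b) (hRb : ∀ i ∈ R, |h i| ≤ b)
    (hRt : R.card ≤ t) :
    l1norm (A.mulVec (restr h R)) ≤ c * (Real.sqrt t * b) := by
  have hsp : Sparse t (restr h R) := ⟨R, hRt, fun i hi => if_neg hi⟩
  refine (hRIP _ hsp).trans (mul_le_mul_of_nonneg_left ?_ hc)
  rw [l2norm_restr]
  have h1 : ∑ i ∈ R, h i ^ 2 ≤ (t : ℝ) * b ^ 2 := by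
    calc ∑ i ∈ R, h i ^ 2 ≤ ∑ _i ∈ R, b ^ 2 := by
          refine Finset.sum_le_sum fun i hi => ?_
          have := hRb i hi
          nlinarith [abs_nonneg (h i), sq_abs (h i)]
      _ = (R.card : ℝ) * b ^ 2 := by rw [Finset.sum_const, nsmul_eq_mul]
      _ ≤ (t : ℝ) * b ^ 2 := by
          apply mul_le_mul_of_nonneg_right _ (sq_nonneg b)
          exact_mod_cast hRt
  calc Real.sqrt (∑ i ∈ R, h i ^ 2) ≤ Real.sqrt ((t : ℝ) * b ^ 2) := Real.sqrt_le_sqrt h1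
    _ = Real.sqrt t * b := by
        rw [Real.sqrt_mul (Nat.cast_nonneg t), Real.sqrt_sq hb]

lemma sqrt_mul_div {t : ℕ} (ht : 0 < t) (S : ℝ) :
    Real.sqrt t * (S / t) = S / Real.sqrt t := by
  have h1 : (0:ℝ) < Real.sqrt t := Real.sqrt_pos.mpr (by exact_mod_cast ht)
  have h2 : Real.sqrt t * Real.sqrt t = (t:ℝ) := Real.mul_self_sqrt (Nat.cast_nonneg t)
  have h3 : (t:ℝ) ≠ 0 := by positivity
  rw [eq_div_iff (ne_of_gt h1)]
  field_simp
  linear_combination S * h2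

lemma key_bound {n m t : ℕ} (ht : 0 < t) (h : Fin n → ℝ) (A : Matrix (Fin m) (Fin n) ℝ)
    (c : ℝ) (hc : 0 ≤ c)
    (hRIP : ∀ v : Fin n → ℝ, Sparse t v → l1norm (A.mulVec v) ≤ c * l2norm v) :
    ∀ (N : ℕ) (R : Finset (Fin n)) (b : ℝ), R.card ≤ N → 0 ≤ b → (∀ i ∈ R, |h i| ≤ b) →
      l1norm (A.mulVec (restr h R)) ≤
        c * (Real.sqrt t * b + (∑ i ∈ R, |h i|) / Real.sqrt t) := by
  have htpos : (0:ℝ) < Real.sqrt t := Real.sqrt_pos.mpr (by exact_mod_cast ht)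
  intro N
  induction N with
  | zero =>
    intro R b hRN hb hRb
    have : R.card ≤ t := le_trans hRN (Nat.zero_le t)
    refine (small_bound ht h A c hc hRIP R b hb hRb this).trans ?_
    have : 0 ≤ (∑ i ∈ R, |h i|) / Real.sqrt t :=
      div_nonneg (Finset.sum_nonneg fun i _ => abs_nonneg _) htpos.le
    nlinarith
  | succ N ihN =>
    intro R b hRN hb hRb
    by_cases hRt : R.card ≤ t
    · refine (small_bound ht h A c hc hRIP R b hb hRb hRt).trans ?_
      have : 0 ≤ (∑ i ∈ R, |h i|) / Real.sqrt t :=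
        div_nonneg (Finset.sum_nonneg fun i _ => abs_nonneg _) htpos.le
      nlinarith
    · push_neg at hRt
      obtain ⟨T, hTR, hTcard, hTmax⟩ := exists_top h t R (le_of_lt hRt)
      set b' : ℝ := (∑ j ∈ T, |h j|) / t with hb'
      have hb'0 : 0 ≤ b' :=
        div_nonneg (Finset.sum_nonneg fun i _ => abs_nonneg _) (Nat.cast_nonneg t)
      have hdom : ∀ i ∈ R \ T, |h i| ≤ b' := by
        intro i hi
        have hsum : (t:ℝ) * |h i| ≤ ∑ j ∈ T, |h j| := by
          calc (t:ℝ) * |h i| = ∑ _j ∈ T, |h i| := by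
                rw [Finset.sum_const, hTcard, nsmul_eq_mul]
            _ ≤ ∑ j ∈ T, |h j| := Finset.sum_le_sum fun j hj => hTmax j hj i hi
        rw [hb', le_div_iff₀ (by exact_mod_cast ht)]
        linarith [hsum]
      have hcard' : (R \ T).card ≤ N := by
        rw [Finset.card_sdiff_of_subset hTR, hTcard]
        omega
      have hIH := ihN (R \ T) b' hcard' hb'0 hdom
      have hTb : ∀ i ∈ T, |h i| ≤ b := fun i hi => hRb i (hTR hi)
      have hsmall := small_bound ht h A c hc hRIP T b hb hTb (le_of_eq hTcard)
      have htri : l1norm (A.mulVec (restr h R)) ≤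
          l1norm (A.mulVec (restr h T)) + l1norm (A.mulVec (restr h (R \ T))) := by
        rw [restr_split h hTR]
        exact l1_mulVec_add_le A _ _
      have hsum_split : ∑ i ∈ R \ T, |h i| + ∑ i ∈ T, |h i| = ∑ i ∈ R, |h i| :=
        Finset.sum_sdiff hTR
      have hb'eq : Real.sqrt t * b' = (∑ j ∈ T, |h j|) / Real.sqrt t :=
        sqrt_mul_div ht _
      calc l1norm (A.mulVec (restr h R)) ≤
            l1norm (A.mulVec (restr h T)) + l1norm (A.mulVec (restr h (R \ T))) := htri
        _ ≤ c * (Real.sqrt t * b) +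
            c * (Real.sqrt t * b' + (∑ i ∈ R \ T, |h i|) / Real.sqrt t) := by
            exact add_le_add hsmall hIH
        _ = c * (Real.sqrt t * b + (∑ i ∈ R, |h i|) / Real.sqrt t) := by
            rw [hb'eq, ← hsum_split]
            field_simp
            ring


set_option maxHeartbeats 1000000 in
/-- lower bound on `‖Ah‖₁`.  Let `0 < α ≤ 1`, `s, t` positive integers with
`√t > α`, and `x, x̂` with `‖x̂‖₁ − α‖x̂‖₂ ≤ ‖x‖₁ − α‖x‖₂`, `h = x̂ − x`.  Let `Th` be the index
set of the `s` largest-magnitude entries of `h` (so `hₘₐₓ₍ₛ₎ = restr h Th`), `T₁` the index set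
of the `t` largest-magnitude entries of `h₋ₘₐₓ₍ₛ₎`, and `T₀₁ = Th ∪ T₁`.  If `A` satisfies the
(ℓ₂,ℓ₁)-RIP bounds `(1 − δ_{t+s}^{lb})‖v‖₂ ≤ ‖Av‖₁` for all `(t+s)`-sparse `v` and
`‖Av‖₁ ≤ (1 + δ_t^{ub})‖v‖₂` for all `t`-sparse `v` then
`‖Ah‖₁ ≥ ρ_t ‖h_{T₀₁}‖₂ − 2(1 + δ_t^{ub})‖x₋ₘₐₓ₍ₛ₎‖₁/(√t − α)` where
`ρ_t = 1 − δ_{t+s}^{lb} − (1 + δ_t^{ub})/a(s,t;α)` and `a(s,t;α) = (√t − α)/(√s + α)`. -/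
theorem stmt4 {n m : ℕ} (α : ℝ) (hα0 : 0 < α) (hα1 : α ≤ 1)
    (s t : ℕ) (hs : 0 < s) (ht : 0 < t) (hαt : α < Real.sqrt t)
    (x xhat : Fin n → ℝ)
    (hmin : l1norm xhat - α * l2norm xhat ≤ l1norm x - α * l2norm x)
    (h : Fin n → ℝ) (hh : h = xhat - x)
    (Th Tx : Finset (Fin n)) (hTh : IsMaxIdx h s Th) (hTx : IsMaxIdx x s Tx)
    (T1 : Finset (Fin n)) (hT1 : IsMaxIdxOn (restr h Thᶜ) t T1 Thᶜ)
    (A : Matrix (Fin m) (Fin n) ℝ) (δlb δub : ℝ) (hδlb : 0 ≤ δlb) (hδub : 0 ≤ δub)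
    (hRIPlb : ∀ v : Fin n → ℝ, Sparse (t + s) v →
      (1 - δlb) * l2norm v ≤ l1norm (A.mulVec v))
    (hRIPub : ∀ v : Fin n → ℝ, Sparse t v →
      l1norm (A.mulVec v) ≤ (1 + δub) * l2norm v)
    (a ρ : ℝ) (ha : a = (Real.sqrt t - α) / (Real.sqrt s + α))
    (hρ : ρ = 1 - δlb - (1 + δub) / a) :
    ρ * l2norm (restr h (Th ∪ T1)) -
        2 * (1 + δub) * l1norm (restr x Txᶜ) / (Real.sqrt t - α) ≤
      l1norm (A.mulVec h) := by
  obtain ⟨-, hThcard, hThmax⟩ := hTh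
  obtain ⟨hT1sub, hT1card, hT1max⟩ := hT1
  have hThmax' : ∀ i ∈ Th, ∀ j, j ∉ Th → |h j| ≤ |h i| := fun i hi j hj =>
    hThmax i hi j (Finset.mem_sdiff.mpr ⟨Finset.mem_univ j, hj⟩)
  have hT1max' : ∀ i ∈ T1, ∀ j ∈ Thᶜ \ T1, |h j| ≤ |h i| := by
    intro i hi j hj
    have := hT1max i hi j hj
    have hjc : j ∈ Thᶜ := (Finset.mem_sdiff.mp hj).1
    have hic : i ∈ Thᶜ := hT1sub hi
    simpa only [restr, if_pos hjc, if_pos hic] using this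
  set sqt := Real.sqrt t with hsqt_def
  set sqs := Real.sqrt s with hsqs_def
  have hsqt : 0 < sqt := lt_of_le_of_lt hα0.le hαt
  have hsqs : 0 ≤ sqs := Real.sqrt_nonneg _
  have hsqta : 0 < sqt - α := sub_pos.mpr hαt
  have hδub1 : (0:ℝ) ≤ 1 + δub := by linarith
  rw [l1norm_restr x Txᶜ]
  set E := l2norm (restr h (Th ∪ T1)) with hE_def
  have hE0 : 0 ≤ E := l2norm_nonneg _
  set L := ∑ i ∈ Thᶜ, |h i| with hL_def
  have hL0 : 0 ≤ L := Finset.sum_nonneg fun i _ => abs_nonneg _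
  set X := ∑ i ∈ Txᶜ, |x i| with hX_def
  have hX0 : 0 ≤ X := Finset.sum_nonneg fun i _ => abs_nonneg _
  -- the cone constraint
  have hxh : ∀ i, xhat i = x i + h i := fun i => by rw [hh]; simp
  have hl2 : l2norm xhat ≤ l2norm x + l2norm h := by
    have hfe : xhat = x + h := funext hxh
    rw [hfe]; exact l2norm_add_le x h
  have hmin2 : l1norm xhat ≤ l1norm x + α * l2norm h := by
    have := mul_le_mul_of_nonneg_left hl2 hα0.le
    linarith [hmin]
  have hsplit1 : ∑ i ∈ Tx, |xhat i| + ∑ i ∈ Txᶜ, |xhat i| = l1norm xhat :=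
    Finset.sum_add_sum_compl Tx _
  have hsplit2 : ∑ i ∈ Tx, |x i| + ∑ i ∈ Txᶜ, |x i| = l1norm x :=
    Finset.sum_add_sum_compl Tx _
  have hlow1 : ∑ i ∈ Txᶜ, |h i| - ∑ i ∈ Txᶜ, |x i| ≤ ∑ i ∈ Txᶜ, |xhat i| := by
    rw [← Finset.sum_sub_distrib]
    refine Finset.sum_le_sum fun i _ => ?_
    rw [hxh i]
    have h1 : |h i| ≤ |x i + h i| + |x i| := by
      have := abs_add_le (x i + h i) (-(x i))
      simpa using this
    linarith
  have hlow2 : ∑ i ∈ Tx, |x i| - ∑ i ∈ Tx, |h i| ≤ ∑ i ∈ Tx, |xhat i| := by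
    rw [← Finset.sum_sub_distrib]
    refine Finset.sum_le_sum fun i _ => ?_
    rw [hxh i]
    have h1 : |x i| ≤ |x i + h i| + |h i| := by
      have := abs_add_le (x i + h i) (-(h i))
      simpa using this
    linarith
  have hcone : ∑ i ∈ Txᶜ, |h i| ≤ ∑ i ∈ Tx, |h i| + 2 * X + α * l2norm h := by
    rw [hX_def]; linarith
  -- comparison of Tx and Th sums of h
  have hTxTh : ∑ i ∈ Tx, |h i| ≤ ∑ i ∈ Th, |h i| := by
    obtain ⟨-, hTxcard, -⟩ := hTx
    have hcards : (Tx \ Th).card ≤ (Th \ Tx).card := by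
      have c1 : (Tx \ (Tx ∩ Th)).card = Tx.card - (Tx ∩ Th).card :=
        Finset.card_sdiff_of_subset Finset.inter_subset_left
      have c2 : (Th \ (Th ∩ Tx)).card = Th.card - (Th ∩ Tx).card :=
        Finset.card_sdiff_of_subset Finset.inter_subset_left
      have c3 : (Tx ∩ Th).card ≤ Tx.card := Finset.card_le_card Finset.inter_subset_left
      have c4 : (Th ∩ Tx).card ≤ Th.card := Finset.card_le_card Finset.inter_subset_left
      rw [Finset.sdiff_inter_self_left] at c1 c2
      rw [Finset.inter_comm] at c2
      omega
    have hdom := sum_dominate (fun i => |h i|) (fun i => abs_nonneg _) (Tx \ Th) (Th \ Tx)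
      hcards (fun j hj i hi =>
        hThmax' i (Finset.mem_sdiff.mp hi).1 j (Finset.mem_sdiff.mp hj).2)
    have e1 : ∑ i ∈ Tx \ (Tx ∩ Th), |h i| + ∑ i ∈ Tx ∩ Th, |h i| = ∑ i ∈ Tx, |h i| :=
      Finset.sum_sdiff Finset.inter_subset_left
    have e2 : ∑ i ∈ Th \ (Th ∩ Tx), |h i| + ∑ i ∈ Th ∩ Tx, |h i| = ∑ i ∈ Th, |h i| :=
      Finset.sum_sdiff Finset.inter_subset_left
    rw [Finset.sdiff_inter_self_left] at e1 e2
    rw [Finset.inter_comm] at e2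
    linarith
  have hLTxc : L ≤ ∑ i ∈ Txᶜ, |h i| := by
    have e1 : ∑ i ∈ Tx, |h i| + ∑ i ∈ Txᶜ, |h i| = ∑ i, |h i| :=
      Finset.sum_add_sum_compl Tx _
    have e2 : ∑ i ∈ Th, |h i| + ∑ i ∈ Thᶜ, |h i| = ∑ i, |h i| :=
      Finset.sum_add_sum_compl Th _
    rw [hL_def]; linarith
  -- Cauchy-Schwarz on Th
  have hE2 : E ^ 2 = ∑ i ∈ Th ∪ T1, h i ^ 2 := by
    rw [hE_def, l2norm_restr]
    exact Real.sq_sqrt (Finset.sum_nonneg fun i _ => sq_nonneg _)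
  have hThE : ∑ i ∈ Th, |h i| ≤ sqs * E := by
    have h1 : (∑ i ∈ Th, |h i|) ^ 2 ≤ (s:ℝ) * ∑ i ∈ Th, |h i| ^ 2 := by
      have := sq_sum_le_card_mul_sum_sq (s := Th) (f := fun i => |h i|)
      rw [hThcard] at this
      exact this
    have h2 : ∑ i ∈ Th, |h i| ^ 2 = ∑ i ∈ Th, h i ^ 2 :=
      Finset.sum_congr rfl fun i _ => sq_abs _
    have h3 : ∑ i ∈ Th, h i ^ 2 ≤ ∑ i ∈ Th ∪ T1, h i ^ 2 :=
      Finset.sum_le_sum_of_subset_of_nonneg Finset.subset_union_left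
        (fun i _ _ => sq_nonneg _)
    have h4 : (∑ i ∈ Th, |h i|) ^ 2 ≤ (sqs * E) ^ 2 := by
      have hsqs2 : sqs ^ 2 = (s:ℝ) := Real.sq_sqrt (Nat.cast_nonneg s)
      calc (∑ i ∈ Th, |h i|) ^ 2 ≤ (s:ℝ) * ∑ i ∈ Th ∪ T1, h i ^ 2 := by
            rw [h2] at h1; nlinarith [h1, h3, Nat.cast_nonneg (α := ℝ) s]
        _ = (sqs * E) ^ 2 := by rw [mul_pow, hsqs2, hE2]
    calc ∑ i ∈ Th, |h i| = Real.sqrt ((∑ i ∈ Th, |h i|) ^ 2) :=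
          (Real.sqrt_sq (Finset.sum_nonneg fun i _ => abs_nonneg _)).symm
      _ ≤ Real.sqrt ((sqs * E) ^ 2) := Real.sqrt_le_sqrt h4
      _ = sqs * E := Real.sqrt_sq (by positivity)
  -- b₁ facts
  set b₁ : ℝ := (∑ j ∈ T1, |h j|) / t with hb₁_def
  have hb₁0 : 0 ≤ b₁ :=
    div_nonneg (Finset.sum_nonneg fun i _ => abs_nonneg _) (Nat.cast_nonneg t)
  have hCeq : (Th ∪ T1)ᶜ = Thᶜ \ T1 := by
    ext i
    simp only [Finset.mem_compl, Finset.mem_union, Finset.mem_sdiff]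
    tauto
  have hb₁dom : ∀ i ∈ (Th ∪ T1)ᶜ, |h i| ≤ b₁ := by
    intro i hi
    rw [hCeq] at hi
    have hsum : (t:ℝ) * |h i| ≤ ∑ j ∈ T1, |h j| := by
      calc (t:ℝ) * |h i| = ∑ _j ∈ T1, |h i| := by
            rw [Finset.sum_const, hT1card, nsmul_eq_mul]
        _ ≤ ∑ j ∈ T1, |h j| := Finset.sum_le_sum fun j hj => hT1max' j hj i hi
    rw [hb₁_def, le_div_iff₀ (by exact_mod_cast ht)]
    linarith
  have hb₁L : ∑ j ∈ T1, |h j| ≤ L :=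
    Finset.sum_le_sum_of_subset_of_nonneg hT1sub (fun i _ _ => abs_nonneg _)
  have hCL : ∑ i ∈ (Th ∪ T1)ᶜ, |h i| ≤ L := by
    rw [hCeq]
    exact Finset.sum_le_sum_of_subset_of_nonneg (Finset.sdiff_subset)
      (fun i _ _ => abs_nonneg _)
  have hSum_CT1 : ∑ i ∈ (Th ∪ T1)ᶜ, |h i| + ∑ j ∈ T1, |h j| = L := by
    rw [hCeq, hL_def]
    exact Finset.sum_sdiff hT1sub
  -- tail l2 bound
  have hTail : l2norm (restr h (Th ∪ T1)ᶜ) ≤ L / sqt := by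
    rw [l2norm_restr]
    have h1 : ∑ i ∈ (Th ∪ T1)ᶜ, h i ^ 2 ≤ L ^ 2 / t := by
      have h2 : ∑ i ∈ (Th ∪ T1)ᶜ, h i ^ 2 ≤ b₁ * ∑ i ∈ (Th ∪ T1)ᶜ, |h i| := by
        rw [Finset.mul_sum]
        refine Finset.sum_le_sum fun i hi => ?_
        have := hb₁dom i hi
        nlinarith [abs_nonneg (h i), sq_abs (h i)]
      have htR : (0:ℝ) < (t:ℝ) := by exact_mod_cast ht
      have hb₁Lt : b₁ ≤ L / t := by
        rw [hb₁_def]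
        exact (div_le_div_iff_of_pos_right htR).mpr hb₁L
      have h3 : b₁ * ∑ i ∈ (Th ∪ T1)ᶜ, |h i| ≤ (L / t) * L :=
        mul_le_mul hb₁Lt hCL (Finset.sum_nonneg fun i _ => abs_nonneg _)
          (div_nonneg hL0 htR.le)
      have h4 : (L / t) * L = L ^ 2 / t := by ring
      linarith
    calc Real.sqrt (∑ i ∈ (Th ∪ T1)ᶜ, h i ^ 2) ≤ Real.sqrt (L ^ 2 / t) :=
          Real.sqrt_le_sqrt h1
      _ = L / sqt := by
          rw [Real.sqrt_div (sq_nonneg L), Real.sqrt_sq hL0, ← hsqt_def]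
  -- decomposition of h
  have hrestr_univ : restr h Finset.univ = h := funext fun i => if_pos (Finset.mem_univ i)
  have hdecomp : h = restr h (Th ∪ T1) + restr h (Th ∪ T1)ᶜ := by
    have := restr_split h (Finset.subset_univ (Th ∪ T1))
    rw [hrestr_univ, ← Finset.compl_eq_univ_sdiff] at this
    exact this
  have hl2h : l2norm h ≤ E + L / sqt := by
    calc l2norm h = l2norm (restr h (Th ∪ T1) + restr h (Th ∪ T1)ᶜ) := by rw [← hdecomp]
      _ ≤ l2norm (restr h (Th ∪ T1)) + l2norm (restr h (Th ∪ T1)ᶜ) := l2norm_add_le _ _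
      _ ≤ E + L / sqt := by rw [← hE_def]; linarith [hTail]
  -- main geometric inequality
  have hMS : L / sqt * sqt = L := div_mul_cancel₀ L (ne_of_gt hsqt)
  have hMain : L / sqt ≤ ((sqs + α) * E + 2 * X) / (sqt - α) := by
    rw [le_div_iff₀ hsqta]
    have hαl2 : α * l2norm h ≤ α * (E + L / sqt) :=
      mul_le_mul_of_nonneg_left hl2h hα0.le
    have hchain : L ≤ (sqs + α) * E + 2 * X + α * (L / sqt) := by
      linarith [hLTxc, hcone, hTxTh, hThE, hαl2]
    have hexp : L / sqt * (sqt - α) = L - α * (L / sqt) := by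
      rw [mul_sub, hMS]; ring
    linarith [hchain, hexp.le, hexp.ge]
  -- RIP lower bound on T01
  have hdisj : Disjoint Th T1 :=
    Finset.disjoint_left.mpr fun i hiTh hiT1 => (Finset.mem_compl.mp (hT1sub hiT1)) hiTh
  have hRIP1 : (1 - δlb) * E ≤ l1norm (A.mulVec (restr h (Th ∪ T1))) := by
    rw [hE_def]
    refine hRIPlb _ ⟨Th ∪ T1, ?_, fun i hi => if_neg hi⟩
    rw [Finset.card_union_of_disjoint hdisj, hThcard, hT1card]
    omega
  -- RIP upper bound on the tail
  have hRIP2 : l1norm (A.mulVec (restr h (Th ∪ T1)ᶜ)) ≤ (1 + δub) * (L / sqt) := by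
    have hkey := key_bound ht h A (1 + δub) hδub1 hRIPub ((Th ∪ T1)ᶜ).card
      ((Th ∪ T1)ᶜ) b₁ le_rfl hb₁0 hb₁dom
    have heq : (1 + δub) * (Real.sqrt t * b₁ + (∑ i ∈ (Th ∪ T1)ᶜ, |h i|) / Real.sqrt t)
        = (1 + δub) * (L / sqt) := by
      rw [hb₁_def, sqrt_mul_div ht, ← hsqt_def]
      rw [← add_div]
      congr 1
      rw [add_comm, hSum_CT1]
    rw [heq] at hkey
    exact hkey
  -- triangle inequality
  have htri : l1norm (A.mulVec (restr h (Th ∪ T1))) ≤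
      l1norm (A.mulVec h) + l1norm (A.mulVec (restr h (Th ∪ T1)ᶜ)) := by
    have e : restr h (Th ∪ T1) = h + -(restr h (Th ∪ T1)ᶜ) := by
      funext i
      have := congrFun hdecomp i
      simp only [Pi.add_apply, Pi.neg_apply] at this ⊢
      linarith
    calc l1norm (A.mulVec (restr h (Th ∪ T1))) =
          l1norm (A.mulVec (h + -(restr h (Th ∪ T1)ᶜ))) := by rw [← e]
      _ ≤ l1norm (A.mulVec h) + l1norm (A.mulVec (-(restr h (Th ∪ T1)ᶜ))) :=
          l1_mulVec_add_le A _ _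
      _ = l1norm (A.mulVec h) + l1norm (A.mulVec (restr h (Th ∪ T1)ᶜ)) := by
          rw [l1_mulVec_neg]
  -- final assembly
  have hup : (1 + δub) * (L / sqt) ≤ (1 + δub) * (((sqs + α) * E + 2 * X) / (sqt - α)) :=
    mul_le_mul_of_nonneg_left hMain hδub1
  have hfinal : (1 - δlb) * E ≤
      l1norm (A.mulVec h) + (1 + δub) * (((sqs + α) * E + 2 * X) / (sqt - α)) := by
    linarith [hRIP1, htri, hRIP2, hup]
  have hρ' : ρ = 1 - δlb - (1 + δub) * (sqs + α) / (sqt - α) := by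
    rw [hρ, ha, div_div_eq_mul_div]
  rw [hρ']
  have hid : (1 - δlb - (1 + δub) * (sqs + α) / (sqt - α)) * E - 2 * (1 + δub) * X / (sqt - α)
      = (1 - δlb) * E - (1 + δub) * (((sqs + α) * E + 2 * X) / (sqt - α)) := by
    field_simp
    ring
  rw [hid]
  linarith [hfinal]
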